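/- Assume a(s)/(log s)^{2γ} → a_∞ and f(s)/s^p → f_∞ as s → +∞ with γ, a_∞, f_∞ > 0 and p > 0. Then the Keller–Osserman condition (existence of r with f(r) > 0, f ≥ 0 on (r,∞), and ∫_{g⁻¹(r)}^{+∞} ds/√(F(g(s))) < ∞ with F(t) = ∫_r^t f) holds if and only if p > 1. -/

import Mathlib

open Filter Topology MeasureTheory

lemma ko_mono {D : Set ℝ} (hD : Convex ℝ D) {h h' : ℝ → ℝ}
    (hd : ∀ x ∈ D, HasDerivAt h (h' x) x) (h0 : ∀ x ∈ interior D, 0 ≤ h' x) :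
    MonotoneOn h D :=
  monotoneOn_of_hasDerivWithinAt_nonneg hD
    (fun x hx => (hd x hx).continuousAt.continuousWithinAt)
    (fun x hx => ((hd x (interior_subset hx)).hasDerivWithinAt)) h0

lemma ko_asymp {f : ℝ → ℝ} {p L : ℝ} (hL : 0 < L)
    (h : Tendsto (fun s => f s / s ^ p) atTop (𝓝 L)) :
    ∀ᶠ s in atTop, L/2 * s ^ p ≤ f s ∧ f s ≤ 2*L * s ^ p := by
  have h1 : ∀ᶠ s in atTop, L/2 < f s / s^p := h.eventually (eventually_gt_nhds (by linarith))
  have h2 : ∀ᶠ s in atTop, f s / s^p < 2*L := h.eventually (eventually_lt_nhds (by linarith))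
  filter_upwards [h1, h2, eventually_gt_atTop 0] with s hs1 hs2 hs0
  have hsp : 0 < s ^ p := Real.rpow_pos_of_pos hs0 p
  exact ⟨((lt_div_iff₀ hsp).mp hs1).le, ((div_lt_iff₀ hsp).mp hs2).le⟩

set_option maxHeartbeats 1600000 in
theorem stmt_9 (a f g ginv : ℝ → ℝ) (ha : ContDiff ℝ 1 a) (ν : ℝ) (hν : 0 < ν)
    (hab : ∀ s, ν ≤ a s) (hf : ContDiff ℝ 1 f)
    (hg : ∀ s, HasDerivAt g (1 / Real.sqrt (a (g s))) s) (hg0 : g 0 = 0)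
    (hinv1 : ∀ s, ginv (g s) = s) (hinv2 : ∀ t, g (ginv t) = t)
    (γ p aInf fInf : ℝ) (hγ : 0 < γ) (hp : 0 < p) (haInf : 0 < aInf) (hfInf : 0 < fInf)
    (haAsym : Tendsto (fun s => a s / (Real.log s) ^ (2 * γ)) atTop (𝓝 aInf))
    (hfAsym : Tendsto (fun s => f s / s ^ p) atTop (𝓝 fInf)) :
    (∃ r : ℝ, 0 < f r ∧ (∀ s, r < s → 0 ≤ f s) ∧
      IntegrableOn (fun s => 1 / Real.sqrt (∫ τ in r..(g s), f τ))
        (Set.Ici (ginv r))) ↔ 1 < p := by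
  have hfC : Continuous f := hf.continuous
  have haC : Continuous a := ha.continuous
  have hsq : ∀ s, 0 < Real.sqrt (a (g s)) := fun s => Real.sqrt_pos.mpr (lt_of_lt_of_le hν (hab _))
  have hgpos : ∀ s, 0 < 1 / Real.sqrt (a (g s)) := fun s => one_div_pos.mpr (hsq s)
  have hgmono : StrictMono g := strictMono_of_hasDerivAt_pos hg hgpos
  have hgd : Differentiable ℝ g := fun s => (hg s).differentiableAt
  have hgC : Continuous g := hgd.continuous
  have hgtop : Tendsto g atTop atTop :=
    tendsto_atTop_atTop_of_monotone hgmono.monotone (fun b => ⟨ginv b, (hinv2 b).ge⟩)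
  have hνs : 0 < Real.sqrt ν := Real.sqrt_pos.mpr hν
  have hgle : ∀ s, 0 ≤ s → g s ≤ s / Real.sqrt ν := by
    intro s hs
    have hm := ko_mono (convex_Ici (0:ℝ))
      (h := fun u => u / Real.sqrt ν - g u)
      (h' := fun u => 1 / Real.sqrt ν - 1 / Real.sqrt (a (g u)))
      (fun u _ => ((hasDerivAt_id u).div_const _).sub (hg u))
      (fun u _ => by
        have h1 : Real.sqrt ν ≤ Real.sqrt (a (g u)) := Real.sqrt_le_sqrt (hab _)
        have := one_div_le_one_div_of_le hνs h1
        linarith)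
    have := hm (Set.self_mem_Ici) (hs : s ∈ Set.Ici (0:ℝ)) hs
    simp only [hg0, zero_div, sub_zero, sub_self] at this
    linarith
  have hGmeas : ∀ r : ℝ, Measurable (fun s => 1 / Real.sqrt (∫ τ in r..g s, f τ)) := by
    intro r
    have h1 : Continuous fun s => ∫ τ in r..g s, f τ :=
      (intervalIntegral.continuous_primitive (fun a b => hfC.intervalIntegrable a b) r).comp hgC
    simpa only [one_div, Function.comp_def, Pi.inv_def] using (Real.continuous_sqrt.measurable.comp h1.measurable).inv
  constructor
  · -- Keller–Osserman ⇒ p > 1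
    rintro ⟨r, hfr, hfpos, hint⟩
    by_contra hple
    push_neg at hple
    obtain ⟨T₀, hT₀⟩ := eventually_atTop.mp ((ko_asymp hfInf hfAsym).and (eventually_ge_atTop 1))
    set T := max T₀ (r + 1) with hT
    have hT1 : (1:ℝ) ≤ T := le_trans (hT₀ T₀ le_rfl).2 (le_max_left _ _)
    have hTr : r + 1 ≤ T := le_max_right _ _
    have hTb : ∀ τ, T ≤ τ → fInf/2 * τ ^ p ≤ f τ ∧ f τ ≤ 2*fInf * τ ^ p ∧ 1 ≤ τ := by
      intro τ hτ
      have := hT₀ τ (le_trans (le_max_left _ _) hτ)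
      exact ⟨this.1.1, this.1.2, this.2⟩
    set C₀ := ∫ τ in r..T, f τ with hC₀
    have hC₀nn : 0 ≤ C₀ := by
      apply intervalIntegral.integral_nonneg (by linarith)
      intro u hu
      rcases eq_or_lt_of_le hu.1 with h | h
      · exact le_of_lt (h ▸ hfr)
      · exact hfpos u h
    set K := C₀ + fInf / ν with hK
    have hKpos : 0 < K := by positivity
    -- eventual lower bound on the integrand
    have hev : ∀ᶠ s in atTop, (Real.sqrt K * s)⁻¹ ≤ 1 / Real.sqrt (∫ τ in r..g s, f τ) := by
      filter_upwards [hgtop.eventually_ge_atTop (T + 1), eventually_ge_atTop (1:ℝ)]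
        with s hgs hs1
      have hs0 : (0:ℝ) < s := by linarith
      have hgsT : T ≤ g s := by linarith
      have hsplit : (∫ τ in r..T, f τ) + (∫ τ in T..g s, f τ) = ∫ τ in r..g s, f τ :=
        intervalIntegral.integral_add_adjacent_intervals
          (hfC.intervalIntegrable r T) (hfC.intervalIntegrable T (g s))
      -- lower bound: positivity
      have hlow : fInf/2 * (g s - T) ≤ ∫ τ in T..g s, f τ := by
        have h1 : ∫ τ in T..g s, (fInf/2) ≤ ∫ τ in T..g s, f τ := by
          apply intervalIntegral.integral_mono_on hgsT intervalIntegrable_const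
            (hfC.intervalIntegrable _ _)
          intro τ hτ
          have hb := hTb τ hτ.1
          have h2 : (1:ℝ) ≤ τ ^ p := by
            calc (1:ℝ) = 1 ^ p := (Real.one_rpow p).symm
            _ ≤ τ ^ p := Real.rpow_le_rpow zero_le_one hb.2.2 hp.le
          nlinarith [hb.1]
        rw [intervalIntegral.integral_const, smul_eq_mul] at h1
        linarith [h1]
      -- upper bound
      have hup : (∫ τ in T..g s, f τ) ≤ fInf * (g s)^2 := by
        have h1 : ∫ τ in T..g s, f τ ≤ ∫ τ in T..g s, 2*fInf*τ := by
          apply intervalIntegral.integral_mono_on hgsT (hfC.intervalIntegrable _ _)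
            ((by continuity : Continuous fun τ : ℝ => 2*fInf*τ).intervalIntegrable _ _)
          intro τ hτ
          have hb := hTb τ hτ.1
          have h2 : τ ^ p ≤ τ := by
            calc τ ^ p ≤ τ ^ (1:ℝ) := Real.rpow_le_rpow_of_exponent_le hb.2.2 hple
            _ = τ := Real.rpow_one τ
          nlinarith [hb.2.1]
        have h2 : ∫ τ in T..g s, 2*fInf*τ = 2*fInf * ((g s)^2 - T^2)/2 := by
          rw [intervalIntegral.integral_const_mul, integral_id]
          ring
        rw [h2] at h1
        nlinarith
      have hFpos : 0 < ∫ τ in r..g s, f τ := by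
        rw [← hsplit]
        have : fInf/2 * (g s - T) ≥ fInf/2 := by nlinarith
        linarith
      have hgsnn : 0 ≤ g s := by linarith
      have hFup : (∫ τ in r..g s, f τ) ≤ K * s^2 := by
        have h1 : (g s)^2 ≤ (s / Real.sqrt ν)^2 :=
          pow_le_pow_left₀ hgsnn (hgle s hs0.le) 2
        have h2 : (s / Real.sqrt ν)^2 = s^2 / ν := by
          rw [div_pow, Real.sq_sqrt hν.le]
        have h3 : (1:ℝ) ≤ s^2 := by nlinarith
        rw [← hsplit]
        have : C₀ ≤ C₀ * s^2 := by nlinarith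
        rw [hK]
        have h4 : fInf * (g s)^2 ≤ fInf / ν * s^2 := by
          rw [h2] at h1
          calc fInf * (g s)^2 ≤ fInf * (s^2/ν) := by nlinarith
          _ = fInf / ν * s^2 := by ring
        nlinarith
      have hsqF : 0 < Real.sqrt (∫ τ in r..g s, f τ) := Real.sqrt_pos.mpr hFpos
      have h5 : Real.sqrt (∫ τ in r..g s, f τ) ≤ Real.sqrt K * s := by
        calc Real.sqrt (∫ τ in r..g s, f τ) ≤ Real.sqrt (K * s^2) := Real.sqrt_le_sqrt hFup
        _ = Real.sqrt K * Real.sqrt (s^2) := Real.sqrt_mul hKpos.le _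
        _ = Real.sqrt K * s := by rw [Real.sqrt_sq hs0.le]
      rw [one_div]
      exact inv_anti₀ hsqF h5
    obtain ⟨S₀, hS₀⟩ := eventually_atTop.mp hev
    set S := max S₀ (max (ginv r) 1) with hS
    have hS1 : (1:ℝ) ≤ S := le_trans (le_max_right _ _) (le_max_right _ _)
    have hintS : IntegrableOn (fun s => 1 / Real.sqrt (∫ τ in r..g s, f τ)) (Set.Ici S) :=
      hint.mono_set (Set.Ici_subset_Ici.mpr (le_trans (le_max_left _ _) (le_max_right _ _)))
    have hmeas2 : AEStronglyMeasurable (fun s : ℝ => (Real.sqrt K * s)⁻¹)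
        (volume.restrict (Set.Ici S)) := by
      exact ((measurable_const.mul measurable_id).inv).aestronglyMeasurable
    have hint2 : IntegrableOn (fun s : ℝ => (Real.sqrt K * s)⁻¹) (Set.Ici S) := by
      apply Integrable.mono' hintS hmeas2
      rw [ae_restrict_iff' measurableSet_Ici]
      refine ae_of_all _ (fun s hs => ?_)
      have hs1 : (1:ℝ) ≤ s := le_trans hS1 hs
      have : (0:ℝ) < Real.sqrt K * s := by
        have := Real.sqrt_pos.mpr hKpos
        nlinarith
      rw [Real.norm_eq_abs, abs_of_nonneg (by positivity)]
      exact hS₀ s (le_trans (le_max_left _ _) hs)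
    have hint3 : IntegrableOn (fun s : ℝ => s⁻¹) (Set.Ici S) := by
      have h1 := hint2.const_mul (Real.sqrt K)
      have hKne : Real.sqrt K ≠ 0 := (Real.sqrt_pos.mpr hKpos).ne'
      refine h1.congr (ae_of_all _ (fun s => ?_))
      show Real.sqrt K * (Real.sqrt K * s)⁻¹ = s⁻¹
      rw [mul_inv, ← mul_assoc, mul_inv_cancel₀ hKne, one_mul]
    exact not_IntegrableOn_Ici_inv hint3
  · -- p > 1 ⇒ Keller–Osserman
    intro hp1
    obtain ⟨T₀, hT₀⟩ := eventually_atTop.mp ((ko_asymp hfInf hfAsym).and (eventually_ge_atTop 1))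
    set r := max T₀ 1 with hrdef
    have hr1 : (1:ℝ) ≤ r := le_max_right _ _
    have hr0 : (0:ℝ) < r := lt_of_lt_of_le one_pos hr1
    have hrlb : ∀ τ, r ≤ τ → fInf/2 * τ ^ p ≤ f τ :=
      fun τ h => (hT₀ τ (le_trans (le_max_left _ _) h)).1.1
    have hfr : 0 < f r := by
      have := hrlb r le_rfl
      have h2 : (0:ℝ) < r ^ p := Real.rpow_pos_of_pos hr0 p
      nlinarith
    have hfpos : ∀ s, r < s → 0 ≤ f s := by
      intro s hs
      have h2 : (0:ℝ) < s ^ p := Real.rpow_pos_of_pos (lt_trans hr0 hs) p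
      nlinarith [hrlb s hs.le]
    refine ⟨r, hfr, hfpos, ?_⟩
    have hgs₀ : g (ginv r) = r := hinv2 r
    have hp1' : (0:ℝ) < p + 1 := by linarith
    have hFlb : ∀ t, r ≤ t → fInf/2 * ((t^(p+1) - r^(p+1))/(p+1)) ≤ ∫ τ in r..t, f τ := by
      intro t ht
      have h1 : ∫ τ in r..t, fInf/2 * τ^p ≤ ∫ τ in r..t, f τ := by
        apply intervalIntegral.integral_mono_on ht
          ((intervalIntegral.intervalIntegrable_rpow' (by linarith)).const_mul _)
          (hfC.intervalIntegrable _ _)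
        exact fun τ hτ => hrlb τ hτ.1
      rwa [intervalIntegral.integral_const_mul, integral_rpow (Or.inl (by linarith))] at h1
    have hFlb2 : ∀ t, r ≤ t → fInf/2 * (t - r) ≤ ∫ τ in r..t, f τ := by
      intro t ht
      have h1 : ∫ τ in r..t, (fInf/2) ≤ ∫ τ in r..t, f τ := by
        apply intervalIntegral.integral_mono_on ht intervalIntegrable_const
          (hfC.intervalIntegrable _ _)
        intro τ hτ
        have h2 : (1:ℝ) ≤ τ ^ p := by
          calc (1:ℝ) = 1 ^ p := (Real.one_rpow p).symm
          _ ≤ τ ^ p := Real.rpow_le_rpow zero_le_one (le_trans hr1 hτ.1) hp.le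
        nlinarith [hrlb τ hτ.1]
      rw [intervalIntegral.integral_const, smul_eq_mul] at h1
      linarith
    -- exponents
    set q := (p+3)/4 with hqdef
    have hq1 : 1 < q := by rw [hqdef]; linarith
    have hq2 : 2*q < p+1 := by rw [hqdef]; linarith
    set β := (2*q/(p+1) + 1)/2 with hβdef
    have hq0' : 0 < 2*q/(p+1) := by positivity
    have hq1' : 2*q/(p+1) < 1 := (div_lt_one hp1').mpr hq2
    have hβ0 : 0 < β := by rw [hβdef]; linarith
    have hββ : 2*q/(p+1) < β := by rw [hβdef]; linarith
    have hβq : 2*q < β*(p+1) := by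
      have := (div_lt_iff₀ hp1').mp hββ
      linarith
    have hβ1 : β < 1 := by rw [hβdef]; linarith
    set ε := (1 - β)/2 with hεdef
    have hε0 : 0 < ε := by rw [hεdef]; linarith
    have hεβ : β < 1 - ε := by rw [hεdef]; linarith
    have h1ε : 0 < 1 - ε := by linarith
    -- eventually √(a (g s)) ≤ s ^ ε
    have haBnd : ∀ᶠ s in atTop, a s ≤ 2*aInf*(Real.log s)^((2:ℝ)*γ) := by
      have h2 := haAsym.eventually (eventually_lt_nhds (by linarith : aInf < 2*aInf))
      filter_upwards [h2, Real.tendsto_log_atTop.eventually_gt_atTop 0] with s hs2 hs0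
      have hsp : 0 < (Real.log s)^((2:ℝ)*γ) := Real.rpow_pos_of_pos hs0 _
      have h3 := (div_lt_iff₀ hsp).mp hs2
      linarith
    set K₂ := 2*aInf * 2^((2:ℝ)*γ) with hK₂def
    have h2γpos : (0:ℝ) < 2^((2:ℝ)*γ) := Real.rpow_pos_of_pos two_pos _
    have hK₂pos : 0 < K₂ := by positivity
    have hsqK₂ : 0 < Real.sqrt K₂ := Real.sqrt_pos.mpr hK₂pos
    have hlo := (isLittleO_log_rpow_rpow_atTop γ hε0).def
      (by positivity : (0:ℝ) < (Real.sqrt K₂)⁻¹)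
    have hev1 : ∀ᶠ s in atTop, Real.sqrt (a (g s)) ≤ s ^ ε := by
      filter_upwards [hgtop.eventually haBnd, hgtop.eventually_ge_atTop 1,
        eventually_ge_atTop (1:ℝ),
        Real.tendsto_log_atTop.eventually_ge_atTop (Real.log (Real.sqrt ν)⁻¹),
        Real.tendsto_log_atTop.eventually_ge_atTop 0,
        hgtop.eventually (Real.tendsto_log_atTop.eventually_ge_atTop 1), hlo]
        with s h1 hsg1 hs1 hslog hslog0 hlog1 hslo
      have hs0 : (0:ℝ) < s := lt_of_lt_of_le one_pos hs1
      have hgs0 : (0:ℝ) < g s := lt_of_lt_of_le one_pos hsg1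
      have h2 : Real.log (g s) ≤ 2 * Real.log s := by
        have h3 : Real.log (g s) ≤ Real.log (s / Real.sqrt ν) :=
          Real.log_le_log hgs0 (hgle s hs0.le)
        rw [Real.log_div hs0.ne' hνs.ne'] at h3
        have h4 : Real.log (Real.sqrt ν)⁻¹ = - Real.log (Real.sqrt ν) := Real.log_inv _
        linarith
      have h4 : (Real.log (g s))^((2:ℝ)*γ) ≤ (2*Real.log s)^((2:ℝ)*γ) :=
        Real.rpow_le_rpow (by linarith) h2 (by positivity)
      have h5 : ((2:ℝ)*Real.log s)^((2:ℝ)*γ) = 2^((2:ℝ)*γ) * (Real.log s)^((2:ℝ)*γ) :=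
        Real.mul_rpow (by norm_num) hslog0
      have h6 : a (g s) ≤ K₂ * (Real.log s)^((2:ℝ)*γ) := by
        rw [hK₂def]
        calc a (g s) ≤ 2*aInf*(Real.log (g s))^((2:ℝ)*γ) := h1
        _ ≤ 2*aInf*(2^((2:ℝ)*γ) * (Real.log s)^((2:ℝ)*γ)) := by
            rw [← h5]; exact mul_le_mul_of_nonneg_left h4 (by positivity)
        _ = 2*aInf*2^((2:ℝ)*γ) * (Real.log s)^((2:ℝ)*γ) := by ring
      have h7 : Real.sqrt (a (g s)) ≤ Real.sqrt K₂ * Real.log s ^ γ := by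
        calc Real.sqrt (a (g s)) ≤ Real.sqrt (K₂ * (Real.log s)^((2:ℝ)*γ)) :=
              Real.sqrt_le_sqrt h6
        _ = Real.sqrt K₂ * Real.sqrt ((Real.log s)^((2:ℝ)*γ)) := Real.sqrt_mul hK₂pos.le _
        _ = Real.sqrt K₂ * Real.log s ^ γ := by
            congr 1
            rw [Real.sqrt_eq_rpow, ← Real.rpow_mul hslog0]
            congr 1
            ring
      have h8 : Real.log s ^ γ ≤ (Real.sqrt K₂)⁻¹ * s ^ ε := by
        have h9 := hslo
        rw [Real.norm_eq_abs, Real.norm_eq_abs, abs_of_nonneg (Real.rpow_nonneg hslog0 γ),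
          abs_of_nonneg (Real.rpow_nonneg hs0.le ε)] at h9
        exact h9
      calc Real.sqrt (a (g s)) ≤ Real.sqrt K₂ * Real.log s ^ γ := h7
      _ ≤ Real.sqrt K₂ * ((Real.sqrt K₂)⁻¹ * s ^ ε) := mul_le_mul_of_nonneg_left h8 hsqK₂.le
      _ = s ^ ε := by field_simp
    obtain ⟨S₁', hS₁'⟩ := eventually_atTop.mp hev1
    set S₁ := max S₁' 1 with hS₁def
    have hS₁1 : (1:ℝ) ≤ S₁ := le_max_right _ _
    have hglow : ∀ s, S₁ ≤ s → g S₁ + (s^(1-ε) - S₁^(1-ε))/(1-ε) ≤ g s := by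
      have hm := ko_mono (convex_Ici S₁)
        (h := fun u => g u - (u^(1-ε) - S₁^(1-ε))/(1-ε))
        (h' := fun u => 1 / Real.sqrt (a (g u)) - u^(1-ε-1))
        (fun u hu => by
          have hu1 : (1:ℝ) ≤ u := le_trans hS₁1 hu
          have hd1 : HasDerivAt (fun u : ℝ => (u^(1-ε) - S₁^(1-ε))/(1-ε)) (u^(1-ε-1)) u := by
            have hd := ((Real.hasDerivAt_rpow_const (p := 1-ε) (x := u)
              (Or.inl (ne_of_gt (by linarith : (0:ℝ) < u)))).sub_const
              (S₁^(1-ε))).div_const (1-ε)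
            have heq : (1-ε) * u^(1-ε-1) / (1-ε) = u^(1-ε-1) :=
              mul_div_cancel_left₀ _ h1ε.ne'
            rwa [heq] at hd
          exact (hg u).sub hd1)
        (fun u hu => by
          rw [interior_Ici] at hu
          have hu1 : (1:ℝ) < u := lt_of_le_of_lt hS₁1 hu
          have hu0 : (0:ℝ) < u := by linarith
          have h2 : Real.sqrt (a (g u)) ≤ u ^ ε := hS₁' u (le_trans (le_max_left _ _) hu.le)
          have h3 : u^(1-ε-1) = (u^ε)⁻¹ := by
            rw [show (1-ε-1 : ℝ) = -ε by ring, Real.rpow_neg hu0.le]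
          have h4 : (u^ε)⁻¹ ≤ (Real.sqrt (a (g u)))⁻¹ := inv_anti₀ (hsq u) h2
          show (0:ℝ) ≤ 1 / Real.sqrt (a (g u)) - u^(1-ε-1)
          rw [h3, one_div]
          linarith)
      intro s hs
      have h0 := hm (Set.self_mem_Ici) (hs : s ∈ Set.Ici S₁) hs
      simp only [sub_self, zero_div] at h0
      linarith
    have hev2 : ∀ᶠ s in atTop, s ^ β ≤ g s := by
      have hδ : 0 < (1-ε) - β := by linarith
      filter_upwards [eventually_ge_atTop S₁,
        (tendsto_rpow_atTop hδ).eventually_ge_atTop 2,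
        (tendsto_rpow_atTop hβ0).eventually_ge_atTop (S₁^(1-ε) - (1-ε) * g S₁),
        eventually_ge_atTop (1:ℝ)] with s h1 h2 h3 h4
      have hs0 : (0:ℝ) < s := by linarith
      have hsplit : s^(1-ε) = s^β * s^((1-ε)-β) := by
        rw [← Real.rpow_add hs0]; congr 1; ring
      have hβnn : (0:ℝ) ≤ s^β := Real.rpow_nonneg hs0.le β
      have key : (s^β - g S₁) * (1-ε) ≤ s^(1-ε) - S₁^(1-ε) := by
        nlinarith [mul_le_mul_of_nonneg_left h2 hβnn]
      have h5 : s^β ≤ g S₁ + (s^(1-ε) - S₁^(1-ε))/(1-ε) := by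
        rw [← sub_le_iff_le_add', le_div_iff₀ h1ε]
        exact key
      linarith [hglow s h1]
    have hev3 : ∀ᶠ s in atTop, s^(2*q) ≤ ∫ τ in r..g s, f τ := by
      have hm0 : 0 < β*(p+1) - 2*q := by linarith
      have h2q0 : (0:ℝ) < 2*q := by linarith
      filter_upwards [hev2, hgtop.eventually_ge_atTop r,
        (tendsto_rpow_atTop hm0).eventually_ge_atTop ((2*(p+1) + fInf)/fInf),
        (tendsto_rpow_atTop h2q0).eventually_ge_atTop (r^(p+1)),
        eventually_ge_atTop (1:ℝ)] with s h1 h2 h3 h4 h5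
      have hs0 : (0:ℝ) < s := by linarith
      have hβnn : (0:ℝ) ≤ s^β := Real.rpow_nonneg hs0.le β
      have hgp : s^(β*(p+1)) ≤ (g s)^(p+1) := by
        rw [Real.rpow_mul hs0.le]
        exact Real.rpow_le_rpow hβnn h1 (by linarith)
      have hsplit : s^(β*(p+1)) = s^(2*q) * s^(β*(p+1) - 2*q) := by
        rw [← Real.rpow_add hs0]; congr 1; ring
      have h2qnn : (0:ℝ) ≤ s^(2*q) := Real.rpow_nonneg hs0.le _
      have h3' : 2*(p+1) + fInf ≤ fInf * s^(β*(p+1)-2*q) := by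
        rw [div_le_iff₀ hfInf] at h3; linarith
      have key : 2*(p+1) * s^(2*q) ≤ fInf * ((g s)^(p+1) - r^(p+1)) := by
        have hA : fInf * s^(β*(p+1)) ≤ fInf * (g s)^(p+1) :=
          mul_le_mul_of_nonneg_left hgp hfInf.le
        have hB : fInf * r^(p+1) ≤ fInf * s^(2*q) :=
          mul_le_mul_of_nonneg_left h4 hfInf.le
        have hC : s^(2*q) * (2*(p+1)+fInf) ≤ s^(2*q) * (fInf * s^(β*(p+1)-2*q)) :=
          mul_le_mul_of_nonneg_left h3' h2qnn
        have hsplit' : fInf * s^(β*(p+1)) = fInf * (s^(2*q) * s^(β*(p+1)-2*q)) := by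
          rw [hsplit]
        linarith only [hA, hB, hC, hsplit']
      have hF := hFlb (g s) h2
      have heq : fInf/2 * (((g s)^(p+1) - r^(p+1))/(p+1))
          = fInf * ((g s)^(p+1) - r^(p+1)) / (2*(p+1)) := by
        field_simp
      have h6 : s^(2*q) ≤ fInf/2 * (((g s)^(p+1) - r^(p+1))/(p+1)) := by
        rw [heq, le_div_iff₀ (by positivity)]
        linarith
      linarith
    have hev4 : ∀ᶠ s in atTop, ‖1 / Real.sqrt (∫ τ in r..g s, f τ)‖ ≤ s^(-q) := by
      filter_upwards [hev3, eventually_ge_atTop (1:ℝ)] with s h1 h4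
      have hs0 : (0:ℝ) < s := by linarith
      have h2q : (0:ℝ) < s^(2*q) := Real.rpow_pos_of_pos hs0 _
      have hs2 : Real.sqrt (s^(2*q)) = s^q := by
        rw [Real.sqrt_eq_rpow, ← Real.rpow_mul hs0.le]
        congr 1; ring
      have h3 : Real.sqrt (s^(2*q)) ≤ Real.sqrt (∫ τ in r..g s, f τ) := Real.sqrt_le_sqrt h1
      have hq0 : (0:ℝ) < s^q := Real.rpow_pos_of_pos hs0 q
      rw [Real.norm_eq_abs, abs_of_nonneg (by positivity)]
      rw [hs2] at h3
      calc 1 / Real.sqrt (∫ τ in r..g s, f τ) ≤ 1 / s^q :=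
            one_div_le_one_div_of_le hq0 h3
      _ = s^(-q) := by rw [Real.rpow_neg hs0.le, one_div]
    obtain ⟨S₂, hS₂⟩ := eventually_atTop.mp hev4
    set S := max S₂ (max (ginv r) 1) with hSdef
    have hS1 : (1:ℝ) ≤ S := le_trans (le_max_right _ _) (le_max_right _ _)
    have hs₀S : ginv r ≤ S := le_trans (le_max_left _ _) (le_max_right _ _)
    have hInt2 : IntegrableOn (fun s => 1 / Real.sqrt (∫ τ in r..g s, f τ)) (Set.Ioi S) := by
      refine Integrable.mono' (g := fun s : ℝ => s^(-q))
        (integrableOn_Ioi_rpow_of_lt (by linarith) (lt_of_lt_of_le one_pos hS1))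
        ((hGmeas r).aestronglyMeasurable.restrict) ?_
      rw [ae_restrict_iff' measurableSet_Ioi]
      exact ae_of_all _ (fun s hs => hS₂ s ((le_max_left _ _).trans_lt hs).le)
    have hInt1 : IntegrableOn (fun s => 1 / Real.sqrt (∫ τ in r..g s, f τ))
        (Set.Icc (ginv r) S) := by
      obtain ⟨u₀, hu₀mem, hmax⟩ := (isCompact_Icc (a := ginv r) (b := S)).exists_isMaxOn
        ⟨ginv r, Set.left_mem_Icc.mpr hs₀S⟩ ((haC.comp hgC).continuousOn)
      set A := a (g u₀) with hAdef
      have hApos : 0 < A := lt_of_lt_of_le hν (hab _)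
      have hsqA : 0 < Real.sqrt A := Real.sqrt_pos.mpr hApos
      have hmono := ko_mono (convex_Icc (ginv r) S)
        (h := fun u => g u - (u - ginv r)/Real.sqrt A)
        (h' := fun u => 1 / Real.sqrt (a (g u)) - 1/Real.sqrt A)
        (fun u _ => (hg u).sub (((hasDerivAt_id u).sub_const _).div_const _))
        (fun u hu => by
          rw [interior_Icc] at hu
          have h1 : Real.sqrt (a (g u)) ≤ Real.sqrt A :=
            Real.sqrt_le_sqrt (hmax (Set.mem_Icc_of_Ioo hu))
          have := one_div_le_one_div_of_le (hsq u) h1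
          linarith)
      have hgA : ∀ s ∈ Set.Icc (ginv r) S, r + (s - ginv r)/Real.sqrt A ≤ g s := by
        intro s hs
        have h0 := hmono (Set.left_mem_Icc.mpr hs₀S) hs hs.1
        simp only [hgs₀, sub_self, zero_div, sub_zero] at h0
        linarith
      set c₁ := fInf/2 * (Real.sqrt A)⁻¹ with hc₁def
      have hc₁pos : 0 < c₁ := by positivity
      have hkint : IntegrableOn (fun s : ℝ => (Real.sqrt c₁)⁻¹ * (s - ginv r)^(-(1/2):ℝ))
          (Set.Icc (ginv r) S) := by
        have h1 : IntervalIntegrable (fun x : ℝ => x ^ (-(1/2):ℝ)) volume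
            (ginv r - ginv r) (S - ginv r) :=
          intervalIntegral.intervalIntegrable_rpow' (by norm_num)
        have h2 : IntervalIntegrable (fun s : ℝ => (s - ginv r)^(-(1/2):ℝ)) volume
            (ginv r) S := by
          have h3 := h1.comp_sub_right (ginv r)
          simpa using h3
        exact (intervalIntegrable_iff_integrableOn_Icc_of_le hs₀S).mp (h2.const_mul _)
      refine Integrable.mono' hkint ((hGmeas r).aestronglyMeasurable.restrict) ?_
      rw [ae_restrict_iff' measurableSet_Icc]
      refine ae_of_all _ (fun s hs => ?_)
      have hrg : r ≤ g s := by
        have h1 := hgA s hs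
        have h2 : 0 ≤ (s - ginv r)/Real.sqrt A :=
          div_nonneg (by linarith [hs.1]) hsqA.le
        linarith
      rcases eq_or_lt_of_le hs.1 with heq | hlt
      · have hgsr : g s = r := by rw [← heq, hgs₀]
        have h0 : s - ginv r = 0 := by rw [← heq, sub_self]
        rw [hgsr]
        simp only [intervalIntegral.integral_same, Real.sqrt_zero, div_zero, norm_zero]
        rw [h0, Real.zero_rpow (by norm_num : (-(1/2):ℝ) ≠ 0), mul_zero]
      · have hGlow : c₁ * (s - ginv r) ≤ ∫ τ in r..g s, f τ := by
          have h1 := hFlb2 (g s) hrg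
          have h2 := hgA s hs
          have h3 : c₁ * (s - ginv r) = fInf/2 * ((s - ginv r)/Real.sqrt A) := by
            rw [hc₁def]; ring
          rw [h3]
          have h4 : (s - ginv r)/Real.sqrt A ≤ g s - r := by linarith
          nlinarith
        have hpos : 0 < c₁ * (s - ginv r) := by
          have h5 : 0 < s - ginv r := by linarith
          positivity
        have hsqpos : 0 < Real.sqrt (c₁ * (s - ginv r)) := Real.sqrt_pos.mpr hpos
        rw [Real.norm_eq_abs, abs_of_nonneg (by positivity)]
        calc 1 / Real.sqrt (∫ τ in r..g s, f τ)
            ≤ 1 / Real.sqrt (c₁ * (s - ginv r)) :=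
              one_div_le_one_div_of_le hsqpos (Real.sqrt_le_sqrt hGlow)
        _ = (Real.sqrt c₁)⁻¹ * (s - ginv r)^(-(1/2):ℝ) := by
              rw [Real.sqrt_mul hc₁pos.le, one_div, mul_inv]
              congr 1
              rw [Real.sqrt_eq_rpow, ← Real.rpow_neg (by linarith : (0:ℝ) ≤ s - ginv r)]
    exact (hInt1.union hInt2).mono_set (fun s hs => by
      rcases le_or_gt s S with h | h
      · exact Or.inl ⟨hs, h⟩
      · exact Or.inr h)
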